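/- Let ρ and σ be density matrices on ℂ^d with spectral decompositions ρ = Σ_i λ_i·u_i u_i† and σ = Σ_j μ_j·v_j v_j†, where (u_i)_{i} and (v_j)_{j} are orthonormal bases of ℂ^d and λ_i, μ_j ≥ 0. Define Γ(i,j) := λ_i·|⟨v_j, u_i⟩|² and Γ̄(i,j) := μ_j·|⟨v_j, u_i⟩|². Then: (1) Γ ≥ 0, Γ̄ ≥ 0 and Σ_{i,j} Γ(i,j) = Σ_{i,j} Γ̄(i,j) = 1, i.e. Γ and Γ̄ are probability mass functions on (Fin d)×(Fin d); (2) for every α ∈ (0,1), Tr(ρ^α · σ^{1−α}) = Σ_{i,j} λ_i^α · μ_j^{1−α} · |⟨v_j, u_i⟩|² = Σ_{i,j} Γ(i,j)^α · Γ̄(i,j)^{1−α}; consequently, if σ is positive definite, the quantum Rényi relative entropy D_α(ρ‖σ) equals the classical Rényi relative entropy (1/(α−1))·log Σ_{i,j} Γ(i,j)^α Γ̄(i,j)^{1−α}. -/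

import Mathlib

open Matrix ComplexOrder

/-- Functional calculus for a matrix: apply `f` to the eigenvalues of a Hermitian matrix
(junk value `0` on non-Hermitian input). -/
noncomputable def matFun {n : Type*} [Fintype n] [DecidableEq n] (f : ℝ → ℝ)
    (A : Matrix n n ℂ) : Matrix n n ℂ :=
  if hA : A.IsHermitian then
    (hA.eigenvectorUnitary : Matrix n n ℂ) *
      Matrix.diagonal (fun i => (f (hA.eigenvalues i) : ℂ)) *
      (hA.eigenvectorUnitary : Matrix n n ℂ)ᴴ
  else 0

/-- Real matrix power `A^t` via functional calculus (with `0^t = 0`). -/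
noncomputable def mrpow {n : Type*} [Fintype n] [DecidableEq n]
    (A : Matrix n n ℂ) (t : ℝ) : Matrix n n ℂ :=
  matFun (fun x => x ^ t) A

/-- A density matrix: positive semidefinite with unit trace. -/
def IsDensity {n : Type*} [Fintype n] (ρ : Matrix n n ℂ) : Prop :=
  ρ.PosSemidef ∧ ρ.trace = 1

/-- The quantum Rényi relative entropy `D_α(ρ‖σ) = (1/(α−1))·log Tr(ρ^α σ^{1−α})`. -/
noncomputable def renyiD {n : Type*} [Fintype n] [DecidableEq n]
    (α : ℝ) (ρ σ : Matrix n n ℂ) : ℝ :=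
  (1 / (α - 1)) * Real.log ((mrpow ρ α * mrpow σ (1 - α)).trace.re)

lemma star_mul_self_eq_normSq (z : ℂ) : star z * z = (Complex.normSq z : ℂ) := by
  rw [Complex.star_def, mul_comm, Complex.mul_conj]

lemma trace_conj_mul_conj {n : Type*} [Fintype n] [DecidableEq n]
    (W X : Matrix n n ℂ) (a b : n → ℝ) :
    (W * Matrix.diagonal (fun i => (a i : ℂ)) * Wᴴ *
      (X * Matrix.diagonal (fun j => (b j : ℂ)) * Xᴴ)).trace =
      ((∑ i, ∑ j, a i * b j * Complex.normSq ((Xᴴ * W) j i) : ℝ) : ℂ) := by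
  set M := Xᴴ * W with hMdef
  have hMH : Mᴴ = Wᴴ * X := by
    rw [hMdef, Matrix.conjTranspose_mul, Matrix.conjTranspose_conjTranspose]
  calc (W * Matrix.diagonal (fun i => (a i : ℂ)) * Wᴴ *
      (X * Matrix.diagonal (fun j => (b j : ℂ)) * Xᴴ)).trace
      = (W * (Matrix.diagonal (fun i => (a i : ℂ)) * (Wᴴ *
          (X * (Matrix.diagonal (fun j => (b j : ℂ)) * Xᴴ))))).trace := by
        simp only [Matrix.mul_assoc]
    _ = ((Matrix.diagonal (fun i => (a i : ℂ)) * (Wᴴ *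
          (X * (Matrix.diagonal (fun j => (b j : ℂ)) * Xᴴ)))) * W).trace :=
        Matrix.trace_mul_comm _ _
    _ = (Matrix.diagonal (fun i => (a i : ℂ)) *
          (Mᴴ * (Matrix.diagonal (fun j => (b j : ℂ)) * M))).trace := by
        congr 1
        rw [hMH, hMdef]
        simp only [Matrix.mul_assoc]
    _ = ∑ i, (a i : ℂ) * ∑ j, star (M j i) * ((b j : ℂ) * M j i) := by
        simp [Matrix.trace, Matrix.diag, Matrix.diagonal_mul, Matrix.mul_apply,
          Matrix.conjTranspose_apply, Finset.mul_sum, Matrix.diagonal_apply, ite_mul,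
          zero_mul, mul_ite, mul_zero, Finset.sum_ite_eq, Finset.sum_ite_eq']
    _ = ((∑ i, ∑ j, a i * b j * Complex.normSq (M j i) : ℝ) : ℂ) := by
        push_cast
        refine Finset.sum_congr rfl fun i _ => ?_
        rw [Finset.mul_sum]
        refine Finset.sum_congr rfl fun j _ => ?_
        rw [← star_mul_self_eq_normSq]
        ring

lemma matFun_unitary_conj {n : Type*} [Fintype n] [DecidableEq n] (f : ℝ → ℝ)
    (W : Matrix n n ℂ) (hW : W ∈ Matrix.unitaryGroup n ℂ) (c : n → ℝ) :
    matFun f (W * Matrix.diagonal (fun i => (c i : ℂ)) * Wᴴ) =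
      W * Matrix.diagonal (fun i => (f (c i) : ℂ)) * Wᴴ := by
  have hWW : Wᴴ * W = 1 := by
    simpa [Matrix.star_eq_conjTranspose] using (Matrix.mem_unitaryGroup_iff').mp hW
  have hWW' : W * Wᴴ = 1 := by
    simpa [Matrix.star_eq_conjTranspose] using (Matrix.mem_unitaryGroup_iff).mp hW
  set A := W * Matrix.diagonal (fun i => (c i : ℂ)) * Wᴴ with hAdef
  have hA : A.IsHermitian := by
    rw [hAdef]
    exact Matrix.isHermitian_mul_mul_conjTranspose W
      (Matrix.isHermitian_diagonal_of_self_adjoint _ (by ext i; simp [Complex.conj_ofReal]))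
  rw [matFun, dif_pos hA]
  set V := (hA.eigenvectorUnitary : Matrix n n ℂ) with hVdef
  have hVV : Vᴴ * V = 1 := by
    simpa [Matrix.star_eq_conjTranspose] using
      (Matrix.mem_unitaryGroup_iff').mp (SetLike.coe_mem hA.eigenvectorUnitary)
  have hVV' : V * Vᴴ = 1 := by
    simpa [Matrix.star_eq_conjTranspose] using
      (Matrix.mem_unitaryGroup_iff).mp (SetLike.coe_mem hA.eigenvectorUnitary)
  set M := Vᴴ * W with hMdef
  have hspec : V * Matrix.diagonal (fun i => ((hA.eigenvalues i : ℝ) : ℂ)) * Vᴴ = A := by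
    have := hA.spectral_theorem
    rw [Unitary.conjStarAlgAut_apply, Matrix.star_eq_conjTranspose] at this
    exact this.symm
  have hDM : Matrix.diagonal (fun i => ((hA.eigenvalues i : ℝ) : ℂ)) * M =
      M * Matrix.diagonal (fun i => (c i : ℂ)) := by
    have h1 : Vᴴ * (V * Matrix.diagonal (fun i => ((hA.eigenvalues i : ℝ) : ℂ)) * Vᴴ) * W =
        Vᴴ * A * W := by rw [hspec]
    calc Matrix.diagonal (fun i => ((hA.eigenvalues i : ℝ) : ℂ)) * M
        = Vᴴ * (V * Matrix.diagonal (fun i => ((hA.eigenvalues i : ℝ) : ℂ)) * Vᴴ) * W := by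
          rw [hMdef]
          simp only [← Matrix.mul_assoc]
          rw [hVV, Matrix.one_mul]
      _ = Vᴴ * A * W := h1
      _ = M * Matrix.diagonal (fun i => (c i : ℂ)) := by
          rw [hAdef, hMdef]
          simp only [← Matrix.mul_assoc]
          rw [Matrix.mul_assoc (Vᴴ * W * Matrix.diagonal fun i => (c i : ℂ)), hWW,
            Matrix.mul_one]
  have hentry : ∀ i j, (hA.eigenvalues i : ℂ) * M i j = M i j * (c j : ℂ) := by
    intro i j
    have := congrFun (congrFun hDM i) j
    simpa [Matrix.diagonal_mul, Matrix.mul_diagonal] using this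
  have hDMf : Matrix.diagonal (fun i => ((f (hA.eigenvalues i) : ℝ) : ℂ)) * M =
      M * Matrix.diagonal (fun i => ((f (c i) : ℝ) : ℂ)) := by
    ext i j
    simp only [Matrix.diagonal_mul, Matrix.mul_diagonal]
    rcases eq_or_ne (M i j) 0 with h | h
    · simp [h]
    · have hec : hA.eigenvalues i = c j := by
        have h2 : ((hA.eigenvalues i : ℂ) - (c j : ℂ)) * M i j = 0 := by
          have := hentry i j
          ring_nf
          ring_nf at this
          linear_combination this
        rcases mul_eq_zero.mp h2 with h3 | h3
        · exact_mod_cast sub_eq_zero.mp h3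
        · exact absurd h3 h
      rw [hec, mul_comm]
  calc V * Matrix.diagonal (fun i => ((f (hA.eigenvalues i) : ℝ) : ℂ)) * Vᴴ
      = V * Matrix.diagonal (fun i => ((f (hA.eigenvalues i) : ℝ) : ℂ)) * Vᴴ * (W * Wᴴ) := by
        rw [hWW', Matrix.mul_one]
    _ = V * (Matrix.diagonal (fun i => ((f (hA.eigenvalues i) : ℝ) : ℂ)) * M) * Wᴴ := by
        simp only [hMdef, Matrix.mul_assoc]
    _ = V * (M * Matrix.diagonal (fun i => ((f (c i) : ℝ) : ℂ))) * Wᴴ := by rw [hDMf]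
    _ = (V * Vᴴ) * W * Matrix.diagonal (fun i => ((f (c i) : ℝ) : ℂ)) * Wᴴ := by
        simp only [hMdef, Matrix.mul_assoc]
    _ = W * Matrix.diagonal (fun i => (f (c i) : ℂ)) * Wᴴ := by rw [hVV', Matrix.one_mul]

set_option maxRecDepth 4000

/-- from spectral decompositions `ρ = Σ λ_i u_i u_i†`, `σ = Σ μ_j v_j v_j†`,
the classical distributions `Γ(i,j) = λ_i |⟨v_j,u_i⟩|²` and `Γ̄(i,j) = μ_j |⟨v_j,u_i⟩|²`
are probability mass functions, and `Tr(ρ^α σ^{1−α}) = Σ Γ^α Γ̄^{1−α}`, so the quantum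
Rényi relative entropy equals its classical counterpart. -/
theorem nussbaum_szkola_distributions
    (d : ℕ) (ρ σ : Matrix (Fin d) (Fin d) ℂ)
    (hρ : IsDensity ρ) (hσ : IsDensity σ)
    (lam mu : Fin d → ℝ) (u v : Fin d → Fin d → ℂ)
    (hlam : ∀ i, 0 ≤ lam i) (hmu : ∀ j, 0 ≤ mu j)
    (hu : ∀ i i', ∑ k, (starRingEnd ℂ) (u i k) * u i' k = if i = i' then 1 else 0)
    (hv : ∀ j j', ∑ k, (starRingEnd ℂ) (v j k) * v j' k = if j = j' then 1 else 0)
    (hρd : ρ = ∑ i, (lam i : ℂ) • Matrix.vecMulVec (u i) (star (u i)))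
    (hσd : σ = ∑ j, (mu j : ℂ) • Matrix.vecMulVec (v j) (star (v j)))
    (Γ Γb : Fin d → Fin d → ℝ)
    (hΓ : ∀ i j, Γ i j = lam i * ‖∑ k, (starRingEnd ℂ) (v j k) * u i k‖ ^ 2)
    (hΓb : ∀ i j, Γb i j = mu j * ‖∑ k, (starRingEnd ℂ) (v j k) * u i k‖ ^ 2) :
    (∀ i j, 0 ≤ Γ i j ∧ 0 ≤ Γb i j) ∧
    (∑ i, ∑ j, Γ i j = 1) ∧ (∑ i, ∑ j, Γb i j = 1) ∧
    (∀ α : ℝ, α ∈ Set.Ioo (0 : ℝ) 1 →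
      ((mrpow ρ α * mrpow σ (1 - α)).trace).re =
        ∑ i, ∑ j, lam i ^ α * mu j ^ (1 - α) *
          ‖∑ k, (starRingEnd ℂ) (v j k) * u i k‖ ^ 2 ∧
      ((mrpow ρ α * mrpow σ (1 - α)).trace).re =
        ∑ i, ∑ j, Γ i j ^ α * Γb i j ^ (1 - α) ∧
      (σ.PosDef →
        renyiD α ρ σ =
          (1 / (α - 1)) * Real.log (∑ i, ∑ j, Γ i j ^ α * Γb i j ^ (1 - α)))) := by
  classical
  set W : Matrix (Fin d) (Fin d) ℂ := Matrix.of fun k i => u i k with hWdef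
  set X : Matrix (Fin d) (Fin d) ℂ := Matrix.of fun k j => v j k with hXdef
  have hWmem : W ∈ Matrix.unitaryGroup (Fin d) ℂ := by
    rw [Matrix.mem_unitaryGroup_iff', Matrix.star_eq_conjTranspose]
    ext i i'
    rw [Matrix.mul_apply, Matrix.one_apply, ← hu i i']
    refine Finset.sum_congr rfl fun k _ => ?_
    rw [Matrix.conjTranspose_apply, hWdef, Matrix.of_apply, Matrix.of_apply, starRingEnd_apply]
  have hXmem : X ∈ Matrix.unitaryGroup (Fin d) ℂ := by
    rw [Matrix.mem_unitaryGroup_iff', Matrix.star_eq_conjTranspose]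
    ext j j'
    rw [Matrix.mul_apply, Matrix.one_apply, ← hv j j']
    refine Finset.sum_congr rfl fun k _ => ?_
    rw [Matrix.conjTranspose_apply, hXdef, Matrix.of_apply, Matrix.of_apply, starRingEnd_apply]
  have hWW : Wᴴ * W = 1 := by
    simpa [Matrix.star_eq_conjTranspose] using (Matrix.mem_unitaryGroup_iff').mp hWmem
  have hWW' : W * Wᴴ = 1 := by
    simpa [Matrix.star_eq_conjTranspose] using (Matrix.mem_unitaryGroup_iff).mp hWmem
  have hXX : Xᴴ * X = 1 := by
    simpa [Matrix.star_eq_conjTranspose] using (Matrix.mem_unitaryGroup_iff').mp hXmem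
  have hXX' : X * Xᴴ = 1 := by
    simpa [Matrix.star_eq_conjTranspose] using (Matrix.mem_unitaryGroup_iff).mp hXmem
  set M := Xᴴ * W with hMdef
  have hM : ∀ j i, M j i = ∑ k, (starRingEnd ℂ) (v j k) * u i k := by
    intro j i
    rw [hMdef, Matrix.mul_apply]
    refine Finset.sum_congr rfl fun k _ => ?_
    rw [Matrix.conjTranspose_apply, hXdef, hWdef, Matrix.of_apply, Matrix.of_apply,
      starRingEnd_apply]
  have habs : ∀ i j, ‖∑ k, (starRingEnd ℂ) (v j k) * u i k‖ ^ 2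
      = Complex.normSq (M j i) := by
    intro i j; rw [hM]; exact Complex.sq_norm _
  have hMM : Mᴴ * M = 1 := by
    have hMH : Mᴴ = Wᴴ * X := by
      rw [hMdef, Matrix.conjTranspose_mul, Matrix.conjTranspose_conjTranspose]
    rw [hMH, hMdef, Matrix.mul_assoc, ← Matrix.mul_assoc X, hXX', Matrix.one_mul, hWW]
  have hMM' : M * Mᴴ = 1 := by
    have hMH : Mᴴ = Wᴴ * X := by
      rw [hMdef, Matrix.conjTranspose_mul, Matrix.conjTranspose_conjTranspose]
    rw [hMH, hMdef, Matrix.mul_assoc, ← Matrix.mul_assoc W, hWW', Matrix.one_mul, hXX]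
  have hrow : ∀ i, ∑ j, Complex.normSq (M j i) = 1 := by
    intro i
    have h1 : (Mᴴ * M) i i = ∑ j, (Complex.normSq (M j i) : ℂ) := by
      rw [Matrix.mul_apply]
      refine Finset.sum_congr rfl fun j _ => ?_
      rw [Matrix.conjTranspose_apply, star_mul_self_eq_normSq]
    rw [hMM, Matrix.one_apply_eq] at h1
    have h2 : ((∑ j, Complex.normSq (M j i) : ℝ) : ℂ) = 1 := by push_cast; rw [← h1]
    exact_mod_cast h2
  have hcol : ∀ j, ∑ i, Complex.normSq (M j i) = 1 := by
    intro j
    have h1 : (M * Mᴴ) j j = ∑ i, (Complex.normSq (M j i) : ℂ) := by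
      simp only [Matrix.mul_apply, Matrix.conjTranspose_apply]
      refine Finset.sum_congr rfl fun i _ => ?_
      rw [mul_comm, star_mul_self_eq_normSq]
    rw [hMM', Matrix.one_apply_eq] at h1
    have h2 : ((∑ i, Complex.normSq (M j i) : ℝ) : ℂ) = 1 := by push_cast; rw [← h1]
    exact_mod_cast h2
  have hρW : ρ = W * Matrix.diagonal (fun i => (lam i : ℂ)) * Wᴴ := by
    rw [hρd]
    ext a' b'
    rw [Matrix.mul_assoc]
    simp only [Matrix.sum_apply, Matrix.smul_apply, Matrix.vecMulVec_apply, Pi.star_apply,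
      Matrix.mul_apply, Matrix.diagonal_apply, ite_mul, zero_mul, Finset.sum_ite_eq,
      Finset.mem_univ, if_true, Matrix.conjTranspose_apply, smul_eq_mul,
      hWdef, Matrix.of_apply]
    refine Finset.sum_congr rfl fun i _ => ?_
    ring
  have hσX : σ = X * Matrix.diagonal (fun j => (mu j : ℂ)) * Xᴴ := by
    rw [hσd]
    ext a' b'
    rw [Matrix.mul_assoc]
    simp only [Matrix.sum_apply, Matrix.smul_apply, Matrix.vecMulVec_apply, Pi.star_apply,
      Matrix.mul_apply, Matrix.diagonal_apply, ite_mul, zero_mul, Finset.sum_ite_eq,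
      Finset.mem_univ, if_true, Matrix.conjTranspose_apply, smul_eq_mul,
      hXdef, Matrix.of_apply]
    refine Finset.sum_congr rfl fun j _ => ?_
    ring
  have hunorm : ∀ i, ∑ k, u i k * star (u i k) = 1 := by
    intro i
    have h := hu i i
    simp only [if_pos rfl] at h
    calc ∑ k, u i k * star (u i k) = ∑ k, (starRingEnd ℂ) (u i k) * u i k := by
          refine Finset.sum_congr rfl fun k _ => ?_
          rw [starRingEnd_apply, mul_comm]
      _ = 1 := h
  have hvnorm : ∀ j, ∑ k, v j k * star (v j k) = 1 := by
    intro j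
    have h := hv j j
    simp only [if_pos rfl] at h
    calc ∑ k, v j k * star (v j k) = ∑ k, (starRingEnd ℂ) (v j k) * v j k := by
          refine Finset.sum_congr rfl fun k _ => ?_
          rw [starRingEnd_apply, mul_comm]
      _ = 1 := h
  have hlam1 : ∑ i, lam i = 1 := by
    have htrρ : ρ.trace = ((∑ i, lam i : ℝ) : ℂ) := by
      rw [hρd, Matrix.trace_sum]
      push_cast
      refine Finset.sum_congr rfl fun i _ => ?_
      rw [Matrix.trace_smul]
      have : (Matrix.vecMulVec (u i) (star (u i))).trace = 1 := by
        simp only [Matrix.trace, Matrix.diag, Matrix.vecMulVec_apply, Pi.star_apply]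
        exact hunorm i
      rw [this, smul_eq_mul, mul_one]
    have := hρ.2
    rw [htrρ] at this
    exact_mod_cast this
  have hmu1 : ∑ j, mu j = 1 := by
    have htrσ : σ.trace = ((∑ j, mu j : ℝ) : ℂ) := by
      rw [hσd, Matrix.trace_sum]
      push_cast
      refine Finset.sum_congr rfl fun j _ => ?_
      rw [Matrix.trace_smul]
      have : (Matrix.vecMulVec (v j) (star (v j))).trace = 1 := by
        simp only [Matrix.trace, Matrix.diag, Matrix.vecMulVec_apply, Pi.star_apply]
        exact hvnorm j
      rw [this, smul_eq_mul, mul_one]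
    have := hσ.2
    rw [htrσ] at this
    exact_mod_cast this
  refine ⟨fun i j => ⟨by rw [hΓ]; exact mul_nonneg (hlam i) (sq_nonneg _),
    by rw [hΓb]; exact mul_nonneg (hmu j) (sq_nonneg _)⟩, ?_, ?_, ?_⟩
  · calc ∑ i, ∑ j, Γ i j = ∑ i, lam i * ∑ j, Complex.normSq (M j i) := by
          refine Finset.sum_congr rfl fun i _ => ?_
          rw [Finset.mul_sum]
          refine Finset.sum_congr rfl fun j _ => ?_
          rw [hΓ, habs]
      _ = ∑ i, lam i := by
          refine Finset.sum_congr rfl fun i _ => ?_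
          rw [hrow, mul_one]
      _ = 1 := hlam1
  · calc ∑ i, ∑ j, Γb i j = ∑ j, ∑ i, Γb i j := Finset.sum_comm
      _ = ∑ j, mu j * ∑ i, Complex.normSq (M j i) := by
          refine Finset.sum_congr rfl fun j _ => ?_
          rw [Finset.mul_sum]
          refine Finset.sum_congr rfl fun i _ => ?_
          rw [hΓb, habs]
      _ = ∑ j, mu j := by
          refine Finset.sum_congr rfl fun j _ => ?_
          rw [hcol, mul_one]
      _ = 1 := hmu1
  · intro α hα
    obtain ⟨hα0, hα1⟩ := hα
    have hρα : mrpow ρ α = W * Matrix.diagonal (fun i => ((lam i ^ α : ℝ) : ℂ)) * Wᴴ := by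
      rw [mrpow, hρW]
      exact matFun_unitary_conj _ W hWmem lam
    have hσα : mrpow σ (1 - α) =
        X * Matrix.diagonal (fun j => ((mu j ^ (1 - α) : ℝ) : ℂ)) * Xᴴ := by
      rw [mrpow, hσX]
      exact matFun_unitary_conj _ X hXmem mu
    have htr : (mrpow ρ α * mrpow σ (1 - α)).trace =
        ((∑ i, ∑ j, lam i ^ α * mu j ^ (1 - α) * Complex.normSq (M j i) : ℝ) : ℂ) := by
      rw [hρα, hσα]
      exact trace_conj_mul_conj W X (fun i => lam i ^ α) (fun j => mu j ^ (1 - α))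
    have hre : ((mrpow ρ α * mrpow σ (1 - α)).trace).re =
        ∑ i, ∑ j, lam i ^ α * mu j ^ (1 - α) * Complex.normSq (M j i) := by
      rw [htr, Complex.ofReal_re]
    have hpt : ∀ i j, Γ i j ^ α * Γb i j ^ (1 - α) =
        lam i ^ α * mu j ^ (1 - α) * Complex.normSq (M j i) := by
      intro i j
      rw [hΓ, hΓb, habs]
      set t := Complex.normSq (M j i) with ht
      have h0 : (0 : ℝ) ≤ t := Complex.normSq_nonneg _
      rw [Real.mul_rpow (hlam i) h0, Real.mul_rpow (hmu j) h0]
      have h1 : t ^ α * t ^ (1 - α) = t := by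
        rw [← Real.rpow_add' h0 (by norm_num)]
        rw [show α + (1 - α) = (1 : ℝ) by ring, Real.rpow_one]
      linear_combination (lam i ^ α * mu j ^ (1 - α)) * h1
    have hre2 : ((mrpow ρ α * mrpow σ (1 - α)).trace).re =
        ∑ i, ∑ j, Γ i j ^ α * Γb i j ^ (1 - α) := by
      rw [hre]
      refine Finset.sum_congr rfl fun i _ => Finset.sum_congr rfl fun j _ => (hpt i j).symm
    refine ⟨?_, hre2, ?_⟩
    · rw [hre]
      refine Finset.sum_congr rfl fun i _ => Finset.sum_congr rfl fun j _ => ?_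
      rw [habs]
    · intro _
      rw [renyiD, hre2]
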